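/- arXiv:2405.17646 — 2 statements merged into one kernel-verified Lean document; each statement's English description precedes it below -/
import Mathlib

section
/- Let P be a finite poset such that the set of elements with crossing number one forms a nonempty saturated chain c_1 < ... < c_k and all other elements have crossing number zero. Then P is an X-orchid: c_k is covered by exactly two elements, c_1 covers exactly two elements, every X-shaped subposet has some c_i as its center, and the center of any X-shaped subposet may be replaced by any other c_j to yield another X-shaped subposet of P. -/
open Classical

variable {α : Type*}

/-- A saturated chain from `v` up to a maximal element: a list `v = v₀ ⋖ v₁ ⋖ … ⋖ vₖ`
with `vₖ` maximal. -/
def UpChain [PartialOrder α] (v : α) (l : List α) : Prop :=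
  l.Chain' (· ⋖ ·) ∧ l.head? = some v ∧ ∃ m, l.getLast? = some m ∧ IsMax m

/-- A saturated chain from a minimal element up to `v`. -/
def DownChain [PartialOrder α] (v : α) (l : List α) : Prop :=
  l.Chain' (· ⋖ ·) ∧ (∃ m, l.head? = some m ∧ IsMin m) ∧ l.getLast? = some v

/-- `uc v` : the number of saturated chains from `v` up to a maximal element. -/
noncomputable def uc [PartialOrder α] (v : α) : ℕ := Nat.card {l : List α // UpChain v l}

/-- `dc v` : the number of saturated chains from `v` down to a minimal element. -/
noncomputable def dc [PartialOrder α] (v : α) : ℕ := Nat.card {l : List α // DownChain v l}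

/-- A maximal chain: a saturated chain from a minimal element to a maximal element. -/
def IsMaxChainList [PartialOrder α] (l : List α) : Prop :=
  l.Chain' (· ⋖ ·) ∧ (∃ m, l.head? = some m ∧ IsMin m) ∧ ∃ m, l.getLast? = some m ∧ IsMax m

/-- `c(P)`: the number of maximal chains. -/
noncomputable def numMaxChains (α : Type*) [PartialOrder α] : ℕ :=
  Nat.card {l : List α // IsMaxChainList l}

/-- `max(P)`: the number of maximal elements. -/
noncomputable def numMax (α : Type*) [PartialOrder α] : ℕ := Nat.card {v : α // IsMax v}

/-- `min(P)`: the number of minimal elements. -/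
noncomputable def numMin (α : Type*) [PartialOrder α] : ℕ := Nat.card {v : α // IsMin v}

/-- `edges(P)`: the number of cover relations (edges of the Hasse diagram). -/
noncomputable def numEdges (α : Type*) [PartialOrder α] : ℕ :=
  Nat.card {p : α × α // p.1 ⋖ p.2}

/-- `gap(P) = c(P) + |P| - (max(P) + min(P) + edges(P))`. -/
noncomputable def gap (α : Type*) [PartialOrder α] : ℤ :=
  (numMaxChains α : ℤ) + Nat.card α - ((numMax α : ℤ) + numMin α + numEdges α)

/-- The crossing number `(uc(v)-1)(dc(v)-1)` of `v`. -/
noncomputable def crossingNumber [PartialOrder α] (v : α) : ℕ := (uc v - 1) * (dc v - 1)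

/-- `c` is the center of an X-shaped subposet: there are `a, b < c < d, e`
with `a ∥ b` and `d ∥ e`. -/
def IsXCenter [PartialOrder α] (c : α) : Prop :=
  ∃ a b d e : α, a < c ∧ b < c ∧ c < d ∧ c < e ∧
    ¬ a ≤ b ∧ ¬ b ≤ a ∧ ¬ d ≤ e ∧ ¬ e ≤ d

/-- `P` contains an X-shaped subposet. -/
def HasX (α : Type*) [PartialOrder α] : Prop := ∃ c : α, IsXCenter c


section Lemmas

open OrderDual Relation

set_option linter.unusedSectionVars false
variable [Fintype α] [PartialOrder α] {v u w x y : α} {l : List α}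

private lemma chain_lt (h : l.Chain' (· ⋖ ·)) : l.Chain' (· < ·) :=
  h.imp fun _ _ hab => hab.lt

private lemma chain_pairwise (h : l.Chain' (· ⋖ ·)) : l.Pairwise (· < ·) :=
  List.isChain_iff_pairwise.mp (chain_lt h)

private instance finite_upChain (v : α) : Finite {l : List α // UpChain v l} := by
  have hsub : {l : List α | UpChain v l} ⊆ {l : List α | l.length ≤ Fintype.card α} := by
    intro l hl
    exact List.Nodup.length_le_card ((chain_pairwise hl.1).imp ne_of_lt)
  exact Set.Finite.to_subtype (Set.Finite.subset (List.finite_length_le α (Fintype.card α)) hsub)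

private instance finite_downChain (v : α) : Finite {l : List α // DownChain v l} := by
  have hsub : {l : List α | DownChain v l} ⊆ {l : List α | l.length ≤ Fintype.card α} := by
    intro l hl
    exact List.Nodup.length_le_card ((chain_pairwise hl.1).imp ne_of_lt)
  exact Set.Finite.to_subtype (Set.Finite.subset (List.finite_length_le α (Fintype.card α)) hsub)

private lemma upChain_cons (hvu : v ⋖ u) (h : UpChain u l) : UpChain v (v :: l) := by
  obtain ⟨hc, hh, m, hlast, hm⟩ := h
  obtain ⟨a, t, rfl⟩ : ∃ a t, l = a :: t := by
    cases l with
    | nil => simp at hh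
    | cons a t => exact ⟨a, t, rfl⟩
  have ha : a = u := by simpa using hh
  subst ha
  exact ⟨List.isChain_cons_cons.mpr ⟨hvu, hc⟩, rfl, m, by simpa [List.getLast?_cons_cons] using hlast, hm⟩

private lemma exists_upChain (v : α) : ∃ l, UpChain v l := by
  have wf : WellFounded ((· > ·) : α → α → Prop) := Finite.to_wellFoundedGT.wf
  refine wf.induction (C := fun v => ∃ l, UpChain v l) v ?_
  intro v IH
  by_cases hv : IsMax v
  · exact ⟨[v], List.isChain_singleton v, rfl, v, rfl, hv⟩
  · obtain ⟨w, hw⟩ := not_isMax_iff.mp hv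
    obtain ⟨u, huc, -⟩ := exists_covBy_le_of_lt hw
    obtain ⟨l, hl⟩ := IH u huc.lt
    exact ⟨v :: l, upChain_cons huc hl⟩

private lemma uc_pos (v : α) : 0 < uc v := by
  obtain ⟨l, hl⟩ := exists_upChain v
  haveI : Nonempty {l : List α // UpChain v l} := ⟨⟨l, hl⟩⟩
  exact Nat.card_pos

private lemma upChain_eq_singleton (hv : IsMax v) (h : UpChain v l) : l = [v] := by
  obtain ⟨hc, hh, -⟩ := h
  cases l with
  | nil => simp at hh
  | cons a t =>
    have ha : a = v := by simpa using hh
    subst ha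
    cases t with
    | nil => rfl
    | cons b t' =>
      have : a ⋖ b := (List.isChain_cons_cons.mp hc).1
      exact absurd this.lt (hv.not_lt)

private lemma uc_isMax (hv : IsMax v) : uc v = 1 := by
  show Nat.card {l : List α // UpChain v l} = 1
  rw [Nat.card_eq_one_iff_exists]
  refine ⟨⟨[v], List.isChain_singleton v, rfl, v, rfl, hv⟩, ?_⟩
  rintro ⟨l, hl⟩
  exact Subtype.ext (upChain_eq_singleton hv hl)


private lemma upChain_decomp (hv : ¬ IsMax v) (h : UpChain v l) :
    ∃ u t, l = v :: u :: t ∧ v ⋖ u ∧ UpChain u (u :: t) := by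
  obtain ⟨hc, hh, m, hlast, hm⟩ := h
  cases l with
  | nil => simp at hh
  | cons a t =>
    have ha : a = v := by simpa using hh
    subst ha
    cases t with
    | nil =>
      exfalso
      have hma : a = m := by simpa using hlast
      exact hv (hma ▸ hm : IsMax a)
    | cons b t' =>
      rw [List.getLast?_cons_cons] at hlast
      exact ⟨b, t', rfl, (List.isChain_cons_cons.mp hc).1,
        (List.isChain_cons_cons.mp hc).2, rfl, m, hlast, hm⟩

private lemma uc_le_of_covBy (hvu : v ⋖ u) : uc u ≤ uc v := by
  refine Nat.card_le_card_of_injective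
    (fun x : {l : List α // UpChain u l} =>
      (⟨v :: x.1, upChain_cons hvu x.2⟩ : {l : List α // UpChain v l})) ?_
  rintro ⟨l1, h1⟩ ⟨l2, h2⟩ h
  simpa [Subtype.ext_iff] using h

private lemma uc_eq_of_unique_cover (hvu : v ⋖ u) (huniq : ∀ w, v ⋖ w → w = u) :
    uc v = uc u := by
  symm
  refine Nat.card_eq_of_bijective
    (fun x : {l : List α // UpChain u l} =>
      (⟨v :: x.1, upChain_cons hvu x.2⟩ : {l : List α // UpChain v l})) ⟨?_, ?_⟩
  · rintro ⟨l1, h1⟩ ⟨l2, h2⟩ h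
    simpa [Subtype.ext_iff] using h
  · rintro ⟨l, hl⟩
    obtain ⟨u', t, rfl, hcu', hup⟩ := upChain_decomp hvu.lt.not_isMax hl
    obtain rfl := huniq u' hcu'
    exact ⟨⟨u' :: t, hup⟩, Subtype.ext rfl⟩

private lemma covers_card_le_uc (v : α) : Nat.card {u : α // v ⋖ u} ≤ uc v := by
  choose f hf using fun u : {u : α // v ⋖ u} => exists_upChain u.1
  refine Nat.card_le_card_of_injective
    (fun u => (⟨v :: f u, upChain_cons u.2 (hf u)⟩ : {l : List α // UpChain v l})) ?_
  intro u1 u2 h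
  have heq : f u1 = f u2 := by simpa [Subtype.ext_iff] using h
  have h1 : (f u1).head? = some u1.1 := (hf u1).2.1
  have h2 : (f u2).head? = some u2.1 := (hf u2).2.1
  rw [heq, h2] at h1
  exact (Subtype.ext (by simpa using h1)).symm

private lemma unique_cover_above (h2v : uc v = 2) (h2w : uc w = 2) (hvw : v ⋖ w)
    {u : α} (hu : v ⋖ u) : u = w := by
  by_contra hne
  have hinj : Function.Injective
      (Sum.elim
        (fun x : {l : List α // UpChain w l} =>
          (⟨v :: x.1, upChain_cons hvw x.2⟩ : {l : List α // UpChain v l}))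
        (fun x : {l : List α // UpChain u l} =>
          (⟨v :: x.1, upChain_cons hu x.2⟩ : {l : List α // UpChain v l}))) := by
    rintro (⟨l1, hl1⟩ | ⟨l1, hl1⟩) (⟨l2, hl2⟩ | ⟨l2, hl2⟩) h <;>
      simp only [Sum.elim_inl, Sum.elim_inr, Subtype.mk.injEq, List.cons.injEq, true_and] at h
    · simpa using h
    · exfalso
      rw [h] at hl1
      have := hl1.2.1
      rw [hl2.2.1] at this
      exact hne (Option.some_injective _ this)
    · exfalso
      rw [h] at hl1
      have := hl1.2.1
      rw [hl2.2.1] at this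
      exact hne (Option.some_injective _ this).symm
    · simpa using h
  have hcard := Nat.card_le_card_of_injective _ hinj
  rw [Nat.card_sum] at hcard
  have h1 := uc_pos u
  rw [uc] at h2v h2w
  rw [uc] at h1
  omega

private lemma le_getLast_of_mem (h : l.Pairwise (· < ·)) (hne : l ≠ []) (hx : x ∈ l) :
    x ≤ l.getLast hne := by
  induction l with
  | nil => simp at hx
  | cons a t IH =>
    rcases List.mem_cons.mp hx with rfl | hx'
    · cases t with
      | nil => simp [List.getLast]
      | cons b t' =>
        rw [List.getLast_cons (List.cons_ne_nil b t')]
        exact le_of_lt ((List.pairwise_cons.mp h).1 _ (List.getLast_mem _))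
    · cases t with
      | nil => simp at hx'
      | cons b t' =>
        rw [List.getLast_cons (List.cons_ne_nil b t')]
        exact IH (List.pairwise_cons.mp h).2 (List.cons_ne_nil b t') hx'

private lemma head_le_of_mem (h : l.Pairwise (· < ·)) (hne : l ≠ []) (hx : x ∈ l) :
    l.head hne ≤ x := by
  cases l with
  | nil => simp at hx
  | cons a t =>
    rcases List.mem_cons.mp hx with rfl | hx'
    · simp
    · exact le_of_lt ((List.pairwise_cons.mp h).1 _ hx')

private lemma chain_total (h : l.Pairwise (· < ·)) (hx : x ∈ l) (hy : y ∈ l) :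
    x ≤ y ∨ y ≤ x := by
  have hp : l.Pairwise (fun a b => a ≤ b ∨ b ≤ a) := h.imp (fun hab => Or.inl hab.le)
  by_cases hxy : x = y
  · exact Or.inl hxy.le
  · exact (haveI : Std.Symm (fun a b : α => a ≤ b ∨ b ≤ a) := ⟨fun a b hab => hab.symm⟩; hp.forall hx hy hxy)

private lemma chain'_and_mem {S : α → α → Prop} {Q : α → Prop} :
    ∀ {l : List α}, l.Chain' S → (∀ x ∈ l, Q x) →
      l.Chain' (fun a b => S a b ∧ Q a ∧ Q b) := by
  intro l
  induction l with
  | nil => intros; simp [List.Chain']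
  | cons a t IH =>
    intro hc hq
    simp only [List.Chain', List.isChain_cons] at hc ⊢
    exact ⟨fun y hy => ⟨hc.1 y hy, hq a (by simp),
        hq y (List.mem_cons_of_mem a (List.mem_of_mem_head? hy))⟩,
      IH hc.2 (fun x hx => hq x (List.mem_cons_of_mem a hx))⟩

private lemma transGen_lt {R : α → α → Prop} (hR : ∀ a b, R a b → a < b)
    (h : Relation.TransGen R x y) : x < y := by
  induction h with
  | single h => exact hR _ _ h
  | tail _ h ih => exact ih.trans (hR _ _ h)

private lemma transGen_of_chain {R : α → α → Prop} (hR : ∀ a b, R a b → a < b)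
    (h : l.Chain' R) (hx : x ∈ l) (hy : y ∈ l) (hxy : x < y) : Relation.TransGen R x y := by
  have hp : l.Pairwise (Relation.TransGen R) :=
    List.isChain_iff_pairwise.mp (h.imp fun a b hab => Relation.TransGen.single hab)
  have hp' : l.Pairwise (fun a b => Relation.TransGen R a b ∨ Relation.TransGen R b a) :=
    hp.imp Or.inl
  rcases (haveI : Std.Symm (fun a b : α => Relation.TransGen R a b ∨ Relation.TransGen R b a) := ⟨fun a b hab => hab.symm⟩; hp'.forall hx hy hxy.ne) with h1 | h1
  · exact h1
  · exact absurd (transGen_lt hR h1) hxy.asymm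

private lemma crossing_one (h : crossingNumber v = 1) : uc v = 2 ∧ dc v = 2 := by
  simp only [crossingNumber] at h
  have h1 := Nat.eq_one_of_mul_eq_one_right h
  have h2 := Nat.eq_one_of_mul_eq_one_left h
  constructor <;> omega


private lemma upChain_dual_iff (v : α) (l : List α) :
    UpChain (OrderDual.toDual v) (l.reverse.map OrderDual.toDual) ↔ DownChain v l := by
  unfold UpChain DownChain
  have h1 : (l.reverse.map (OrderDual.toDual (α := α))).Chain' (· ⋖ ·) ↔ l.Chain' (· ⋖ ·) := by
    simp [List.Chain', List.isChain_map, List.isChain_reverse, Function.flip_def, toDual_covBy_toDual_iff]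
  have h2 : (l.reverse.map (OrderDual.toDual (α := α))).head? = some (OrderDual.toDual v) ↔
      l.getLast? = some v := by
    simp [List.head?_map]
  have h3 : (∃ m, (l.reverse.map (OrderDual.toDual (α := α))).getLast? = some m ∧ IsMax m) ↔
      (∃ m, l.head? = some m ∧ IsMin m) := by
    simp [List.getLast?_eq_head?_reverse, List.head?_map, ← List.map_reverse]
  rw [h1, h2, h3]
  tauto

private lemma downChain_dual_iff (v : α) (l : List α) :
    DownChain (OrderDual.toDual v) (l.reverse.map OrderDual.toDual) ↔ UpChain v l := by
  unfold UpChain DownChain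
  have h1 : (l.reverse.map (OrderDual.toDual (α := α))).Chain' (· ⋖ ·) ↔ l.Chain' (· ⋖ ·) := by
    simp [List.Chain', List.isChain_map, List.isChain_reverse, Function.flip_def, toDual_covBy_toDual_iff]
  have h2 : (∃ m, (l.reverse.map (OrderDual.toDual (α := α))).head? = some m ∧ IsMin m) ↔
      (∃ m, l.getLast? = some m ∧ IsMax m) := by
    simp [List.head?_map]
  have h3 : ((l.reverse.map (OrderDual.toDual (α := α))).getLast? = some (OrderDual.toDual v)) ↔
      l.head? = some v := by
    simp [List.getLast?_eq_head?_reverse, List.head?_map, ← List.map_reverse]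
  rw [h1, h2, h3]
  tauto

private def downUpEquiv (v : α) :
    {l : List α // DownChain v l} ≃ {l : List αᵒᵈ // UpChain (OrderDual.toDual v) l} where
  toFun x := ⟨x.1.reverse.map OrderDual.toDual, (upChain_dual_iff v x.1).mpr x.2⟩
  invFun y := ⟨(y.1.map OrderDual.ofDual).reverse, by
    refine (upChain_dual_iff v _).mp ?_
    have h : ((y.1.map OrderDual.ofDual).reverse).reverse.map OrderDual.toDual = y.1 := by
      simp [List.map_map, Function.comp_def]
    rw [h]
    exact y.2⟩
  left_inv x := Subtype.ext (by simp [List.map_map, Function.comp_def])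
  right_inv y := Subtype.ext (by simp [List.map_map, Function.comp_def])

private def upDownEquiv (v : α) :
    {l : List α // UpChain v l} ≃ {l : List αᵒᵈ // DownChain (OrderDual.toDual v) l} where
  toFun x := ⟨x.1.reverse.map OrderDual.toDual, (downChain_dual_iff v x.1).mpr x.2⟩
  invFun y := ⟨(y.1.map OrderDual.ofDual).reverse, by
    refine (downChain_dual_iff v _).mp ?_
    have h : ((y.1.map OrderDual.ofDual).reverse).reverse.map OrderDual.toDual = y.1 := by
      simp [List.map_map, Function.comp_def]
    rw [h]
    exact y.2⟩
  left_inv x := Subtype.ext (by simp [List.map_map, Function.comp_def])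
  right_inv y := Subtype.ext (by simp [List.map_map, Function.comp_def])

private lemma dc_eq_dual_uc (v : α) : dc v = uc (OrderDual.toDual v) :=
  Nat.card_congr (downUpEquiv v)

private lemma uc_eq_dual_dc (v : α) : uc v = dc (OrderDual.toDual v) :=
  Nat.card_congr (upDownEquiv v)

private lemma crossing_toDual (v : α) :
    crossingNumber (OrderDual.toDual v) = crossingNumber v := by
  simp only [crossingNumber]
  rw [← dc_eq_dual_uc, ← uc_eq_dual_dc, Nat.mul_comm]

private lemma dc_pos (v : α) : 0 < dc v := by
  rw [dc_eq_dual_uc]; exact uc_pos _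

private lemma dc_isMin (hv : IsMin v) : dc v = 1 := by
  rw [dc_eq_dual_uc]; exact uc_isMax (isMax_toDual_iff.mpr hv)

private lemma dc_le_of_covBy (hvu : v ⋖ u) : dc v ≤ dc u := by
  rw [dc_eq_dual_uc v, dc_eq_dual_uc u]
  exact uc_le_of_covBy hvu.toDual

private lemma unique_cover_below (h2v : dc v = 2) (h2w : dc w = 2) (hwv : w ⋖ v)
    {u : α} (hu : u ⋖ v) : u = w := by
  rw [dc_eq_dual_uc] at h2v h2w
  have := unique_cover_above h2v h2w hwv.toDual hu.toDual
  exact OrderDual.toDual.injective this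

private lemma dc_eq_of_unique_below (hvu : u ⋖ v) (huniq : ∀ w, w ⋖ v → w = u) :
    dc v = dc u := by
  rw [dc_eq_dual_uc v, dc_eq_dual_uc u]
  refine uc_eq_of_unique_cover hvu.toDual ?_
  intro w hw
  exact congrArg OrderDual.toDual (huniq (OrderDual.ofDual w) (toDual_covBy_toDual_iff.mp hw))

private lemma exists_upChain_mem (hxy : x < y) : ∃ l, UpChain x l ∧ y ∈ l := by
  have wf : WellFounded ((· > ·) : α → α → Prop) := Finite.to_wellFoundedGT.wf
  refine wf.induction (C := fun x => x < y → ∃ l, UpChain x l ∧ y ∈ l) x ?_ hxy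
  intro x IH hxy
  obtain ⟨u, hcu, huy⟩ := exists_covBy_le_of_lt hxy
  rcases eq_or_lt_of_le huy with rfl | hlt
  · obtain ⟨l, hl⟩ := exists_upChain u
    exact ⟨x :: l, upChain_cons hcu hl,
      List.mem_cons_of_mem _ (List.mem_of_mem_head? (by rw [hl.2.1]; rfl))⟩
  · obtain ⟨l, hl, hyl⟩ := IH u hcu.lt hlt
    exact ⟨x :: l, upChain_cons hcu hl, List.mem_cons_of_mem _ hyl⟩

private lemma exists_downChain_mem (hxy : x < y) : ∃ l, DownChain y l ∧ x ∈ l := by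
  obtain ⟨L, hL, hxL⟩ := exists_upChain_mem (α := αᵒᵈ)
    (show OrderDual.toDual y < OrderDual.toDual x from hxy)
  refine ⟨(L.map OrderDual.ofDual).reverse, ?_, ?_⟩
  · refine (upChain_dual_iff y _).mp ?_
    have h : ((L.map OrderDual.ofDual).reverse).reverse.map OrderDual.toDual = L := by
      simp [List.map_map, Function.comp_def]
    rw [h]
    exact hL
  · simp only [List.mem_reverse, List.mem_map]
    exact ⟨OrderDual.toDual x, hxL, rfl⟩

private lemma uc_ge_two {c d e : α} (hd : c < d) (he : c < e)
    (hde : ¬ d ≤ e) (hed : ¬ e ≤ d) : 2 ≤ uc c := by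
  obtain ⟨l1, h1, hd1⟩ := exists_upChain_mem hd
  obtain ⟨l2, h2, he2⟩ := exists_upChain_mem he
  have hne : l1 ≠ l2 := by
    rintro rfl
    rcases chain_total (chain_pairwise h1.1) hd1 he2 with h | h
    exacts [hde h, hed h]
  have : Nontrivial {l : List α // UpChain c l} :=
    ⟨⟨l1, h1⟩, ⟨l2, h2⟩, by simp [Subtype.ext_iff, hne]⟩
  exact Finite.one_lt_card_iff_nontrivial.mpr this

private lemma dc_ge_two {c a b : α} (ha : a < c) (hb : b < c)
    (hab : ¬ a ≤ b) (hba : ¬ b ≤ a) : 2 ≤ dc c := by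
  obtain ⟨l1, h1, ha1⟩ := exists_downChain_mem ha
  obtain ⟨l2, h2, hb2⟩ := exists_downChain_mem hb
  have hne : l1 ≠ l2 := by
    rintro rfl
    rcases chain_total (chain_pairwise h1.1) ha1 hb2 with h | h
    exacts [hab h, hba h]
  have : Nontrivial {l : List α // DownChain c l} :=
    ⟨⟨l1, h1⟩, ⟨l2, h2⟩, by simp [Subtype.ext_iff, hne]⟩
  exact Finite.one_lt_card_iff_nontrivial.mpr this


private lemma transGen_preserve {R : α → α → Prop} {P : α → Prop}
    (step : ∀ p q, R p q → P p → P q) (h : Relation.TransGen R x y) (hx : P x) : P y := by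
  induction h with
  | single h => exact step _ _ h hx
  | tail _ h ih => exact step _ _ h ih

private lemma transGen_preserve_back {R : α → α → Prop} {P : α → Prop}
    (step : ∀ p q, R p q → P q → P p) (h : Relation.TransGen R x y) (hy : P y) : P x := by
  induction h with
  | single h => exact step _ _ h hy
  | tail _ h ih => exact ih (step _ _ h hy)

private lemma last_covers (l : List α) (hne : l ≠ []) (hchain : l.Chain' (· ⋖ ·))
    (hone : ∀ v ∈ l, crossingNumber v = 1)
    (hzero : ∀ v : α, v ∉ l → crossingNumber v = 0) :
    Nat.card {u : α // l.getLast hne ⋖ u} = 2 := by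
  set v := l.getLast hne with hv
  have hvl : v ∈ l := List.getLast_mem hne
  obtain ⟨hu2, hd2⟩ := crossing_one (hone v hvl)
  have hnmax : ¬ IsMax v := by
    intro h
    rw [uc_isMax h] at hu2
    omega
  obtain ⟨w0, hw0⟩ := not_isMax_iff.mp hnmax
  obtain ⟨u1, hcu1, -⟩ := exists_covBy_le_of_lt hw0
  have hnotuniq : ¬ ∀ u, v ⋖ u → u = u1 := by
    intro huniq
    have h1 : uc u1 = 2 := (uc_eq_of_unique_cover hcu1 huniq).symm.trans hu2
    have h2 : 2 ≤ dc u1 := hd2 ▸ dc_le_of_covBy hcu1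
    have h3 : crossingNumber u1 ≠ 0 := by
      simp only [crossingNumber, h1]
      omega
    have hmem : u1 ∈ l := by
      by_contra hm
      exact h3 (hzero u1 hm)
    have hle := le_getLast_of_mem (chain_pairwise hchain) hne hmem
    rw [← hv] at hle
    exact hcu1.lt.not_ge hle
  push_neg at hnotuniq
  obtain ⟨u2, hcu2, hne12⟩ := hnotuniq
  have hle : Nat.card {u : α // v ⋖ u} ≤ 2 := hu2 ▸ covers_card_le_uc v
  have hge : 2 ≤ Nat.card {u : α // v ⋖ u} :=
    Finite.one_lt_card_iff_nontrivial.mpr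
      ⟨⟨u2, hcu2⟩, ⟨u1, hcu1⟩, fun h => hne12 (congrArg Subtype.val h)⟩
  omega

end Lemmas

theorem crossing_chain_is_xOrchid (α : Type*) [Fintype α] [PartialOrder α] (l : List α) (hne : l ≠ [])
    (hchain : l.Chain' (· ⋖ ·))
    (hone : ∀ v ∈ l, crossingNumber v = 1)
    (hzero : ∀ v : α, v ∉ l → crossingNumber v = 0) :
    Nat.card {u : α // l.getLast hne ⋖ u} = 2 ∧
    Nat.card {d : α // d ⋖ l.head hne} = 2 ∧
    (∀ c : α, IsXCenter c → c ∈ l) ∧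
    (∀ c ∈ l, ∀ c' ∈ l, IsXCenter c → IsXCenter c') := by
  refine ⟨last_covers l hne hchain hone hzero, ?_, ?_, ?_⟩
  · set dl : List αᵒᵈ := l.reverse.map OrderDual.toDual with hdl
    have hne' : dl ≠ [] := by simp [hdl, hne]
    have hchain' : dl.Chain' (· ⋖ ·) := by
      rw [hdl]
      simpa [List.Chain', List.isChain_map, List.isChain_reverse, Function.flip_def, toDual_covBy_toDual_iff]
        using hchain
    have hone' : ∀ v ∈ dl, crossingNumber v = 1 := by
      intro v hv
      rw [hdl] at hv
      simp only [List.mem_map, List.mem_reverse] at hv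
      obtain ⟨w, hwl, rfl⟩ := hv
      rw [crossing_toDual]
      exact hone w hwl
    have hzero' : ∀ v : αᵒᵈ, v ∉ dl → crossingNumber v = 0 := by
      intro v hv
      have hmem : OrderDual.ofDual v ∉ l := by
        intro hmem
        refine hv ?_
        rw [hdl]
        simp only [List.mem_map, List.mem_reverse]
        exact ⟨_, hmem, rfl⟩
      have h0 := hzero _ hmem
      rw [← crossing_toDual] at h0
      exact h0
    have h2 := last_covers dl hne' hchain' hone' hzero'
    have hlast : dl.getLast hne' = OrderDual.toDual (l.head hne) := by
      have ha : dl.getLast? = some (dl.getLast hne') := List.getLast?_eq_getLast_of_ne_nil hne'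
      have hb : dl.getLast? = some (OrderDual.toDual (l.head hne)) := by
        rw [hdl]
        simp [List.getLast?_eq_head?_reverse, List.head?_map, ← List.map_reverse,
          List.head?_eq_head hne]
      rw [ha] at hb
      exact Option.some_injective _ hb
    rw [hlast] at h2
    rw [← h2]
    exact Nat.card_congr (Equiv.subtypeEquiv OrderDual.toDual fun d => toDual_covBy_toDual_iff.symm)
  · intro c hc
    obtain ⟨a, b, d, e, ha, hb, hd, he, hab, hba, hde, hed⟩ := hc
    have h1 := uc_ge_two hd he hde hed
    have h2 := dc_ge_two ha hb hab hba
    by_contra hcl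
    have h0 := hzero c hcl
    simp only [crossingNumber] at h0
    rcases Nat.mul_eq_zero.mp h0 with h | h <;> omega
  · intro c hcl c' hcl' hX
    obtain ⟨a, b, d, e, ha, hb, hd, he, hab, hba, hde, hed⟩ := hX
    have hchR : l.Chain' (fun p q => p ⋖ q ∧ crossingNumber p = 1 ∧ crossingNumber q = 1) :=
      chain'_and_mem hchain hone
    have hRlt : ∀ p q : α, (p ⋖ q ∧ crossingNumber p = 1 ∧ crossingNumber q = 1) → p < q :=
      fun p q h => h.1.lt
    rcases chain_total (chain_pairwise hchain) hcl hcl' with hle | hle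
    · rcases eq_or_lt_of_le hle with rfl | hlt
      · exact ⟨a, b, d, e, ha, hb, hd, he, hab, hba, hde, hed⟩
      · have htg := transGen_of_chain hRlt hchR hcl hcl' hlt
        have key : c' < d ∧ c' < e := by
          refine transGen_preserve (P := fun z => z < d ∧ z < e) ?_ htg ⟨hd, he⟩
          rintro p q ⟨hpq, hp1, hq1⟩ ⟨hpd, hpe⟩
          obtain ⟨hup, -⟩ := crossing_one hp1
          obtain ⟨huq, -⟩ := crossing_one hq1
          obtain ⟨u, hcu, hud⟩ := exists_covBy_le_of_lt hpd
          obtain ⟨u', hcu', hue⟩ := exists_covBy_le_of_lt hpe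
          have h1 : u = q := unique_cover_above hup huq hpq hcu
          have h2 : u' = q := unique_cover_above hup huq hpq hcu'
          rw [h1] at hud
          rw [h2] at hue
          constructor
          · exact lt_of_le_of_ne hud (fun h => hde (h ▸ hue))
          · exact lt_of_le_of_ne hue (fun h => hed (h ▸ hud))
        exact ⟨a, b, d, e, ha.trans hlt, hb.trans hlt, key.1, key.2, hab, hba, hde, hed⟩
    · rcases eq_or_lt_of_le hle with rfl | hlt
      · exact ⟨a, b, d, e, ha, hb, hd, he, hab, hba, hde, hed⟩
      · have htg := transGen_of_chain hRlt hchR hcl' hcl hlt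
        have key : a < c' ∧ b < c' := by
          refine transGen_preserve_back (P := fun z => a < z ∧ b < z) ?_ htg ⟨ha, hb⟩
          rintro p q ⟨hpq, hp1, hq1⟩ ⟨haq, hbq⟩
          obtain ⟨-, hdp⟩ := crossing_one hp1
          obtain ⟨-, hdq⟩ := crossing_one hq1
          obtain ⟨u, hau, hcu⟩ := exists_le_covBy_of_lt haq
          obtain ⟨u', hbu', hcu'⟩ := exists_le_covBy_of_lt hbq
          have h1 : u = p := unique_cover_below hdq hdp hpq hcu
          have h2 : u' = p := unique_cover_below hdq hdp hpq hcu'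
          rw [h1] at hau
          rw [h2] at hbu'
          constructor
          · exact lt_of_le_of_ne hau (fun h => hba (by rw [h]; exact hbu'))
          · exact lt_of_le_of_ne hbu' (fun h => hab (by rw [h]; exact hau))
        exact ⟨a, b, d, e, key.1, key.2, hlt.trans hd, hlt.trans he, hab, hba, hde, hed⟩
end

section
/- Let P be a finite poset with at least one element v satisfying uc(v) ≥ 2 and dc(v) ≥ 2 (i.e., P contains an X-shaped subposet). Then gap(P) = c(P) + |P| - (max(P) + min(P) + edges(P)) ≥ 1. -/
open Classical

variable {α : Type*}

section Aux
variable [Fintype α] [PartialOrder α]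

private noncomputable def pUp (u : α) : α :=
  if h : IsMax u then u else Classical.choose (exists_covBy_of_wellFoundedLT h)

private lemma pUp_covBy {u : α} (h : ¬ IsMax u) : u ⋖ pUp u := by
  rw [pUp, dif_neg h]; exact Classical.choose_spec (exists_covBy_of_wellFoundedLT h)

private noncomputable def pDn (u : α) : α :=
  if h : IsMin u then u else Classical.choose (exists_covBy_of_wellFoundedGT h)

private lemma pDn_covBy {u : α} (h : ¬ IsMin u) : pDn u ⋖ u := by
  rw [pDn, dif_neg h]; exact Classical.choose_spec (exists_covBy_of_wellFoundedGT h)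

private noncomputable def ucard (u : α) : ℕ := (Finset.univ.filter (u < ·)).card

private lemma ucard_lt {u w : α} (h : u < w) : ucard w < ucard u := by
  apply Finset.card_lt_card
  constructor
  · intro x hx
    simp only [Finset.mem_filter, Finset.mem_univ, true_and] at *
    exact h.trans hx
  · intro hsub
    have := hsub (by simp [Finset.mem_filter, h] : w ∈ Finset.univ.filter (u < ·))
    simp [Finset.mem_filter] at this

private noncomputable def dcard (u : α) : ℕ := (Finset.univ.filter (· < u)).card

private lemma dcard_lt {u w : α} (h : w < u) : dcard w < dcard u := by
  apply Finset.card_lt_card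
  constructor
  · intro x hx
    simp only [Finset.mem_filter, Finset.mem_univ, true_and] at *
    exact hx.trans h
  · intro hsub
    have := hsub (by simp [Finset.mem_filter, h] : w ∈ Finset.univ.filter (· < u))
    simp [Finset.mem_filter] at this

private noncomputable def Uch (u : α) : List α :=
  if h : IsMax u then [u] else u :: Uch (pUp u)
termination_by ucard u
decreasing_by exact ucard_lt (pUp_covBy h).lt

private noncomputable def Dch (u : α) : List α :=
  if h : IsMin u then [u] else Dch (pDn u) ++ [u]
termination_by dcard u
decreasing_by exact dcard_lt (pDn_covBy h).lt

private lemma Uch_max {u : α} (h : IsMax u) : Uch u = [u] := by rw [Uch, dif_pos h]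
private lemma Uch_not_max {u : α} (h : ¬ IsMax u) : Uch u = u :: Uch (pUp u) := by
  rw [Uch, dif_neg h]
private lemma Dch_min {u : α} (h : IsMin u) : Dch u = [u] := by rw [Dch, dif_pos h]
private lemma Dch_not_min {u : α} (h : ¬ IsMin u) : Dch u = Dch (pDn u) ++ [u] := by
  rw [Dch, dif_neg h]

private lemma Uch_ne_nil (u : α) : Uch u ≠ [] := by
  by_cases h : IsMax u
  · simp [Uch_max h]
  · simp [Uch_not_max h]

private lemma Dch_ne_nil (u : α) : Dch u ≠ [] := by
  by_cases h : IsMin u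
  · simp [Dch_min h]
  · simp [Dch_not_min h]

private lemma Uch_head? (u : α) : (Uch u).head? = some u := by
  by_cases h : IsMax u
  · rw [Uch_max h]; rfl
  · rw [Uch_not_max h]; rfl

private lemma Dch_getLast? (u : α) : (Dch u).getLast? = some u := by
  by_cases h : IsMin u
  · rw [Dch_min h]; rfl
  · rw [Dch_not_min h]; simp

private lemma Uch_inj {a b : α} (h : Uch a = Uch b) : a = b := by
  have h1 := Uch_head? a
  rw [h, Uch_head? b] at h1
  exact (Option.some_inj.1 h1).symm

private lemma Dch_inj {a b : α} (h : Dch a = Dch b) : a = b := by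
  have h1 := Dch_getLast? a
  rw [h, Dch_getLast? b] at h1
  exact (Option.some_inj.1 h1).symm

private lemma upChain_Uch (u : α) : UpChain u (Uch u) := by
  induction u using Uch.induct with
  | case1 u h => rw [Uch_max h]; exact ⟨List.isChain_singleton u, rfl, u, rfl, h⟩
  | case2 u h ih =>
    obtain ⟨hc, hh, m, hl, hm⟩ := ih
    rw [Uch_not_max h]
    refine ⟨?_, rfl, m, ?_, hm⟩
    · rw [List.Chain', List.isChain_cons]
      refine ⟨fun y hy => ?_, hc⟩
      rw [Uch_head?] at hy
      cases hy
      exact pUp_covBy h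
    · rw [show u :: Uch (pUp u) = [u] ++ Uch (pUp u) from rfl,
        List.getLast?_append_of_ne_nil _ (Uch_ne_nil _)]
      exact hl

private lemma downChain_Dch (u : α) : DownChain u (Dch u) := by
  induction u using Dch.induct with
  | case1 u h => rw [Dch_min h]; exact ⟨List.isChain_singleton u, ⟨u, rfl, h⟩, rfl⟩
  | case2 u h ih =>
    obtain ⟨hc, ⟨m, hh, hm⟩, hl⟩ := ih
    rw [Dch_not_min h]
    refine ⟨?_, ⟨m, ?_, hm⟩, by simp⟩
    · rw [List.Chain', List.isChain_append]
      refine ⟨hc, List.isChain_singleton u, fun x hx y hy => ?_⟩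
      rw [Dch_getLast?] at hx
      cases hx
      simp only [List.head?_cons, Option.mem_def, Option.some_inj] at hy
      cases hy
      exact pDn_covBy h
    · rw [List.head?_append_of_ne_nil _ (Dch_ne_nil _)]
      exact hh

private lemma Uch_suffix : ∀ {u : α} {l1 l2 : List α} {x : α},
    Uch u = l1 ++ x :: l2 → Uch x = x :: l2 := by
  intro u
  induction u using Uch.induct with
  | case1 u h =>
    intro l1 l2 x he
    rw [Uch_max h] at he
    rcases l1 with _ | ⟨a, l1⟩
    · simp only [List.nil_append, List.cons.injEq] at he
      obtain ⟨rfl, rfl⟩ := he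
      exact Uch_max h
    · exfalso
      have := congrArg List.length he
      simp at this
  | case2 u h ih =>
    intro l1 l2 x he
    rw [Uch_not_max h] at he
    rcases l1 with _ | ⟨a, l1⟩
    · simp only [List.nil_append, List.cons.injEq] at he
      obtain ⟨rfl, rfl⟩ := he
      exact Uch_not_max h
    · simp only [List.cons_append, List.cons.injEq] at he
      exact ih he.2

private lemma Dch_prefix : ∀ {u : α} {l1 l2 : List α} {x : α},
    Dch u = l1 ++ x :: l2 → Dch x = l1 ++ [x] := by
  intro u
  induction u using Dch.induct with
  | case1 u h =>
    intro l1 l2 x he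
    rw [Dch_min h] at he
    rcases l1 with _ | ⟨a, l1⟩
    · simp only [List.nil_append, List.cons.injEq] at he
      obtain ⟨rfl, rfl⟩ := he
      simp [Dch_min h]
    · exfalso
      have := congrArg List.length he
      simp at this
  | case2 u h ih =>
    intro l1 l2 x he
    rw [Dch_not_min h] at he
    rcases List.eq_nil_or_concat l2 with rfl | ⟨l2', a, rfl⟩
    · obtain ⟨h1, h2⟩ := List.append_inj' he rfl
      simp only [List.cons.injEq] at h2
      obtain ⟨rfl, -⟩ := h2
      rw [Dch_not_min h, h1]
    · have he' : Dch (pDn u) ++ [u] = (l1 ++ x :: l2') ++ [a] := by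
        rw [he]; simp
      obtain ⟨h1, h2⟩ := List.append_inj' he' rfl
      exact ih h1

omit [Fintype α] [PartialOrder α] in
private lemma len_pos (l : List α) (h : l ≠ []) : 1 ≤ l.length := by
  cases l
  · simp at h
  · simp

omit [Fintype α] [PartialOrder α] in
private lemma getLast?_cons_ne {a : α} {t : List α} (h : t ≠ []) :
    (a :: t).getLast? = t.getLast? := by
  rw [show a :: t = [a] ++ t from rfl, List.getLast?_append_of_ne_nil _ h]

private lemma upChain_cons_s19 {v : α} {l : List α} (hl : UpChain v l) : l = v :: l.tail := by
  obtain ⟨-, hh, -⟩ := hl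
  cases l with
  | nil => simp at hh
  | cons a t =>
    simp only [List.head?_cons, Option.some_inj] at hh
    rw [hh]
    rfl

private lemma upChain_alt_tail_ne {v : α} {l : List α} (hl : UpChain v l) (hne : l ≠ Uch v) :
    l.tail ≠ [] := by
  intro ht
  have hcons := upChain_cons_s19 hl
  rw [ht] at hcons
  obtain ⟨-, -, m, hgl, hm⟩ := hl
  rw [hcons] at hgl
  simp only [List.getLast?_singleton, Option.some_inj] at hgl
  subst hgl
  exact hne (by rw [hcons, Uch_max hm])

private lemma isMaxChain_glue {u w : α} (h : u ⋖ w) : IsMaxChainList (Dch u ++ Uch w) := by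
  obtain ⟨hc1, ⟨m, hh, hm⟩, hl⟩ := downChain_Dch u
  obtain ⟨hc2, hh2, m2, hl2, hm2⟩ := upChain_Uch w
  refine ⟨?_, ⟨m, ?_, hm⟩, ⟨m2, ?_, hm2⟩⟩
  · rw [List.Chain', List.isChain_append]
    refine ⟨hc1, hc2, fun x hx y hy => ?_⟩
    rw [hl] at hx
    cases hx
    rw [hh2] at hy
    cases hy
    exact h
  · rw [List.head?_append_of_ne_nil _ (Dch_ne_nil _)]; exact hh
  · rw [List.getLast?_append_of_ne_nil _ (Uch_ne_nil _)]; exact hl2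

private lemma isMaxChain_star {v : α} {d l : List α} (hd : DownChain v d) (hl : UpChain v l)
    (hne : l ≠ Uch v) : IsMaxChainList (d ++ l.tail) := by
  have htne : l.tail ≠ [] := upChain_alt_tail_ne hl hne
  have hcons := upChain_cons_s19 hl
  obtain ⟨hdc, ⟨m, hh, hm⟩, hgl⟩ := hd
  obtain ⟨hlc, hlh, m2, hl2, hm2⟩ := hl
  have hdnn : d ≠ [] := by intro h0; rw [h0] at hgl; simp at hgl
  refine ⟨?_, ⟨m, ?_, hm⟩, ⟨m2, ?_, hm2⟩⟩
  · rw [List.Chain', List.isChain_append]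
    refine ⟨hdc, hlc.tail, fun x hx y hy => ?_⟩
    rw [hgl] at hx
    cases hx
    have h2 := hlc
    rw [hcons, List.Chain', List.isChain_cons] at h2
    exact h2.1 y hy
  · rw [List.head?_append_of_ne_nil _ hdnn]; exact hh
  · rw [List.getLast?_append_of_ne_nil _ htne]
    rw [hcons, getLast?_cons_ne htne] at hl2
    exact hl2

private lemma notMin_of_covBy {u w : α} (h : u ⋖ w) : ¬ IsMin w :=
  fun hw => h.lt.not_ge (hw h.lt.le)

private lemma M1aux {u w u' w' : α} (h : u ⋖ w)
    (heq : Dch u ++ Uch w = Dch u' ++ Uch w') (hlen : (Dch u).length < (Dch u').length) :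
    ¬ IsMax w ∧ pDn w = u := by
  rcases List.append_eq_append_iff.1 heq with ⟨m, hm1, hm2⟩ | ⟨m, hm1, hm2⟩
  · have hmne : m ≠ [] := by
      intro hm0
      rw [hm0, List.append_nil] at hm1
      rw [hm1] at hlen
      omega
    have hhw : m.head? = some w := by
      have h0 := Uch_head? w
      rw [hm2, List.head?_append_of_ne_nil _ hmne] at h0
      exact h0
    have hmc : m = w :: m.tail := by
      cases m with
      | nil => exact absurd rfl hmne
      | cons a t =>
        simp only [List.head?_cons, Option.some_inj] at hhw
        rw [hhw]
        rfl
    have hwmax : ¬ IsMax w := by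
      intro hw
      have h1 : (Uch w).length = 1 := by rw [Uch_max hw]; rfl
      rw [hm2] at h1
      have h2 := len_pos m hmne
      have h3 := len_pos (Uch w') (Uch_ne_nil w')
      rw [List.length_append] at h1
      omega
    have hpre : Dch w = Dch u ++ [w] := Dch_prefix (by rw [hm1, hmc])
    rw [Dch_not_min (notMin_of_covBy h)] at hpre
    obtain ⟨h1, -⟩ := List.append_inj' hpre rfl
    exact ⟨hwmax, Dch_inj h1⟩
  · exfalso
    have h0 := congrArg List.length hm1
    rw [List.length_append] at h0
    omega

private lemma top_inj {u w u' w' : α} (h : u ⋖ w) (h' : u' ⋖ w')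
    (ht : ¬ (¬ IsMax w ∧ pDn w = u)) (ht' : ¬ (¬ IsMax w' ∧ pDn w' = u'))
    (heq : Dch u ++ Uch w = Dch u' ++ Uch w') : u = u' ∧ w = w' := by
  rcases lt_trichotomy (Dch u).length (Dch u').length with hl | hl | hl
  · exact absurd (M1aux h heq hl) ht
  · obtain ⟨h1, h2⟩ := List.append_inj heq hl
    exact ⟨Dch_inj h1, Uch_inj h2⟩
  · exact absurd (M1aux h' heq.symm hl) ht'

private lemma fiber_empty {v u w : α} {d l : List α} (hd : DownChain v d) (hl : UpChain v l)
    (hdne : d ≠ Dch v) (hlne : l ≠ Uch v) (h : u ⋖ w) :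
    Dch u ++ Uch w ≠ d ++ l.tail := by
  intro heq
  have hdv : d.dropLast ++ [v] = d := List.dropLast_append_getLast? v hd.2.2
  have hlv : l = v :: l.tail := upChain_cons_s19 hl
  rcases List.append_eq_append_iff.1 heq with ⟨m, hm1, hm2⟩ | ⟨m, hm1, hm2⟩
  · rcases eq_or_ne m [] with rfl | hmne
    · rw [List.append_nil] at hm1
      have h1 : (Dch u).getLast? = some v := by rw [← hm1]; exact hd.2.2
      have h2 := Dch_getLast? u
      rw [h1] at h2
      exact hdne (by rw [hm1, Option.some_inj.1 h2])
    · have hgl : m.getLast? = some v := by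
        have h0 := hd.2.2
        rw [hm1, List.getLast?_append_of_ne_nil _ hmne] at h0
        exact h0
      have hmv : m.dropLast ++ [v] = m := List.dropLast_append_getLast? v hgl
      have hsu : Uch w = m.dropLast ++ v :: l.tail := by
        rw [hm2, ← hmv]
        simp
      have h3 := Uch_suffix hsu
      exact hlne (by rw [hlv, ← h3])
  · have hDu : Dch u = d.dropLast ++ v :: m := by
      rw [hm1, ← hdv]
      simp
    have h3 := Dch_prefix hDu
    rw [hdv] at h3
    exact hdne h3.symm

private lemma nodup_of_chain' {l : List α} (h : l.Chain' (· ⋖ ·)) : l.Nodup := by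
  have h2 : l.Chain' (· < ·) := List.IsChain.imp (fun a b hc => hc.lt) h
  exact List.Pairwise.imp ne_of_lt (List.isChain_iff_pairwise.1 h2)

private lemma finite_chainlike (P : List α → Prop) (hP : ∀ l, P l → l.Chain' (· ⋖ ·)) :
    Finite {l : List α // P l} :=
  Set.Finite.to_subtype <| (List.finite_length_le α (Fintype.card α)).subset
    fun l hl => (nodup_of_chain' (hP l hl)).length_le_card

instance : Finite {l : List α // IsMaxChainList l} := finite_chainlike _ fun _ hl => hl.1


private noncomputable def theMap (ld lu : List α) (hstar : IsMaxChainList (ld ++ lu.tail)) :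
    ({p : α × α // p.1 ⋖ p.2}) ⊕ ({m : α // IsMax m} ⊕ ({m : α // IsMin m} ⊕ Unit)) →
    ({l : List α // IsMaxChainList l} ⊕ α)
  | Sum.inl ⟨(u, w), hu⟩ =>
      if ¬ IsMax w ∧ pDn w = u then Sum.inr w
      else Sum.inl ⟨Dch u ++ Uch w, isMaxChain_glue hu⟩
  | Sum.inr (Sum.inl ⟨m, _⟩) => Sum.inr m
  | Sum.inr (Sum.inr (Sum.inl ⟨m, hm⟩)) =>
      if hx : IsMax m then Sum.inl ⟨[m], ⟨List.isChain_singleton m, ⟨m, rfl, hm⟩, ⟨m, rfl, hx⟩⟩⟩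
      else Sum.inr m
  | Sum.inr (Sum.inr (Sum.inr _)) => Sum.inl ⟨ld ++ lu.tail, hstar⟩

end Aux

theorem gap_ge_one_of_crossing (α : Type*) [Fintype α] [PartialOrder α]
    (v : α) (huc : 2 ≤ uc v) (hdc : 2 ≤ dc v) :
    1 ≤ gap α := by
  classical
  have hUfin : Finite {l : List α // UpChain v l} := finite_chainlike _ fun _ hl => hl.1
  have hDfin : Finite {l : List α // DownChain v l} := finite_chainlike _ fun _ hl => hl.1
  obtain ⟨lu, hlu, hlune⟩ : ∃ l, UpChain v l ∧ l ≠ Uch v := by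
    have hnt : Nontrivial {l : List α // UpChain v l} :=
      Finite.one_lt_card_iff_nontrivial.1 (lt_of_lt_of_le one_lt_two huc)
    obtain ⟨⟨l1, hl1⟩, ⟨l2, hl2⟩, hne12⟩ := hnt
    by_cases h1 : l1 = Uch v
    · exact ⟨l2, hl2, fun h2 => hne12 (Subtype.ext (h1.trans h2.symm))⟩
    · exact ⟨l1, hl1, h1⟩
  obtain ⟨ld, hld, hldne⟩ : ∃ d, DownChain v d ∧ d ≠ Dch v := by
    have hnt : Nontrivial {l : List α // DownChain v l} :=
      Finite.one_lt_card_iff_nontrivial.1 (lt_of_lt_of_le one_lt_two hdc)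
    obtain ⟨⟨l1, hl1⟩, ⟨l2, hl2⟩, hne12⟩ := hnt
    by_cases h1 : l1 = Dch v
    · exact ⟨l2, hl2, fun h2 => hne12 (Subtype.ext (h1.trans h2.symm))⟩
    · exact ⟨l1, hl1, h1⟩
  have hCstar : IsMaxChainList (ld ++ lu.tail) := isMaxChain_star hld hlu hlune
  have hldnn : ld ≠ [] := by
    intro h0
    have := hld.2.2
    rw [h0] at this
    simp at this
  have hlenstar : 2 ≤ (ld ++ lu.tail).length := by
    have h1 := len_pos ld hldnn
    have h2 := len_pos lu.tail (upChain_alt_tail_ne hlu hlune)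
    rw [List.length_append]
    omega
  have hlen2 : ∀ u w : α, 2 ≤ (Dch u ++ Uch w).length := fun u w => by
    have h1 := len_pos (Dch u) (Dch_ne_nil u)
    have h2 := len_pos (Uch w) (Uch_ne_nil w)
    rw [List.length_append]
    omega
  have hinj : Function.Injective (theMap ld lu hCstar) := by
    rintro (⟨⟨u, w⟩, hu⟩ | ⟨m, hm⟩ | ⟨m, hm⟩ | x) (⟨⟨u', w'⟩, hu'⟩ | ⟨m', hm'⟩ | ⟨m', hm'⟩ | x')
      hfe <;> simp only [theMap] at hfe
    -- edge / edge
    · split_ifs at hfe with h1 h2 h2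
      · obtain rfl : w = w' := by simpa using hfe
        obtain rfl : u = u' := h1.2.symm.trans h2.2
        rfl
      · have heq : Dch u ++ Uch w = Dch u' ++ Uch w' := by simpa using hfe
        obtain ⟨rfl, rfl⟩ := top_inj hu hu' h1 h2 heq
        rfl
    -- edge / max
    · split_ifs at hfe with h1
      obtain rfl : w = m' := by simpa using hfe
      exact absurd hm' h1.1
    -- edge / min
    · split_ifs at hfe with h1 h2 h2
      · obtain rfl : w = m' := by simpa using hfe
        exact absurd hm' (notMin_of_covBy hu)
      · exfalso
        have heq : Dch u ++ Uch w = [m'] := by have := congrArg Subtype.val (Sum.inl_injective hfe); simpa using this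
        have h3 := hlen2 u w
        rw [heq] at h3
        simp at h3
    -- edge / star
    · split_ifs at hfe with h1
      have heq : Dch u ++ Uch w = ld ++ lu.tail := by simpa using hfe
      exact absurd heq (fiber_empty hld hlu hldne hlune hu)
    -- max / edge
    · split_ifs at hfe with h1
      obtain rfl : m = w' := by simpa using hfe
      exact absurd hm h1.1
    -- max / max
    · obtain rfl : m = m' := by simpa using hfe
      rfl
    -- max / min
    · split_ifs at hfe with h1
      obtain rfl : m = m' := by simpa using hfe
      exact absurd hm h1
    -- max / star
    · simp at hfe
    -- min / edge
    · split_ifs at hfe with h1 h2 h2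
      · exfalso
        have heq : ([m] : List α) = Dch u' ++ Uch w' := by have := congrArg Subtype.val (Sum.inl_injective hfe); simpa using this
        have h3 := hlen2 u' w'
        rw [← heq] at h3
        simp at h3
      · obtain rfl : m = w' := by simpa using hfe
        exact absurd hm (notMin_of_covBy hu')
    -- min / max
    · split_ifs at hfe with h1
      obtain rfl : m = m' := by simpa using hfe
      exact absurd hm' h1
    -- min / min
    · split_ifs at hfe with h1 h2 h2
      · obtain rfl : m = m' := by have := congrArg Subtype.val (Sum.inl_injective hfe); simpa using this
        rfl
      · obtain rfl : m = m' := by simpa using hfe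
        rfl
    -- min / star
    · split_ifs at hfe with h1
      exfalso
      have heq : ([m] : List α) = ld ++ lu.tail := by have := congrArg Subtype.val (Sum.inl_injective hfe); simpa using this
      have h3 := hlenstar
      rw [← heq] at h3
      simp at h3
    -- star / edge
    · split_ifs at hfe with h1
      have heq : Dch u' ++ Uch w' = ld ++ lu.tail := by simpa using hfe.symm
      exact absurd heq (fiber_empty hld hlu hldne hlune hu')
    -- star / max
    · simp at hfe
    -- star / min
    · split_ifs at hfe with h1
      exfalso
      have heq : ([m'] : List α) = ld ++ lu.tail := by have := congrArg Subtype.val (Sum.inl_injective hfe.symm); simpa using this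
      have h3 := hlenstar
      rw [← heq] at h3
      simp at h3
    -- star / star
    · exact congrArg _ (congrArg _ (congrArg _ (Subsingleton.elim x x')))
  have hcard := Nat.card_le_card_of_injective _ hinj
  rw [Nat.card_sum, Nat.card_sum, Nat.card_sum, Nat.card_sum] at hcard
  have hE : Nat.card {p : α × α // p.1 ⋖ p.2} = numEdges α := rfl
  have hM : Nat.card {m : α // IsMax m} = numMax α := rfl
  have hN : Nat.card {m : α // IsMin m} = numMin α := rfl
  have hC : Nat.card {l : List α // IsMaxChainList l} = numMaxChains α := rfl
  have hP : Nat.card Unit = 1 := Nat.card_unique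
  rw [hE, hM, hN, hC, hP] at hcard
  rw [gap]
  omega
end
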